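/- Let G'=(V',E') be a finite simple graph in which every vertex has degree at least 1 and at most d, let q ≥ 2 and 2 ≤ r ≤ q be integers, and let ε > 0, α > 0, β > 0 satisfy α > 7ε and β ≤ 1/q^{10}. Let S ⊆ V' satisfy μ_{G'}(S) = μ_{G'}/q and e_{G'}(S, V'∖S) ≤ (ε/2)·μ_{G'}(S). Let C_1, …, C_r be a partition of V' such that for every i: every vertex of the induced subgraph G'[C_i] has degree at least 1 in G'[C_i], the conductance of the induced subgraph satisfies φ_{G'[C_i]} ≥ α, φ_{G'}(C_i) ≤ β, and μ_{G'}(C_i) ≥ μ_{G'}/(q+1). Then there exists an index i ∈ {1,…,r} such that μ_{G'}(C_i △ S) ≤ (4ε/α + q²β)·d·μ_{G'}(S), where △ denotes symmetric difference. -/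

import Mathlib

open scoped Classical
open Matrix

noncomputable section

namespace Sublinear

variable {V : Type*}

/-- The degree `d(v)` of a vertex, as a real number. -/
def deg [Fintype V] (G : SimpleGraph V) (v : V) : ℝ :=
  ((Finset.univ.filter fun u => G.Adj v u).card : ℝ)

/-- The volume `μ_G(S)` of a set of vertices. -/
def vol [Fintype V] (G : SimpleGraph V) (S : Set V) : ℝ :=
  ∑ v ∈ Finset.univ.filter (fun v => v ∈ S), deg G v

/-- The number of ordered adjacent pairs `(u,v)` with `u ∈ S`, `v ∈ T`.
For disjoint `S`, `T` this equals the number `e_G(S,T)` of edges between `S` and `T`. -/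
def eB [Fintype V] (G : SimpleGraph V) (S T : Set V) : ℝ :=
  (((Finset.univ : Finset (V × V)).filter
      fun p => p.1 ∈ S ∧ p.2 ∈ T ∧ G.Adj p.1 p.2).card : ℝ)

/-- The number `e_G(S)` of edges with both endpoints in `S`. -/
def eIn [Fintype V] (G : SimpleGraph V) (S : Set V) : ℝ := eB G S S / 2

/-- The conductance `φ_G(S)` of a set of vertices. -/
def cond [Fintype V] (G : SimpleGraph V) (S : Set V) : ℝ :=
  eB G S Sᶜ / vol G S

/-- The conductance `φ_G` of the graph: the minimum of `φ_G(S)` over nonempty `S`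
with `μ_G(S) ≤ μ_G/2`. -/
def conductance [Fintype V] (G : SimpleGraph V) : ℝ :=
  sInf {x | ∃ S : Set V, S.Nonempty ∧ vol G S ≤ vol G Set.univ / 2 ∧ x = cond G S}

section Lemmas

variable [Fintype V] (G : SimpleGraph V)

lemma deg_nonneg (v : V) : 0 ≤ deg G v := Nat.cast_nonneg _

lemma deg_eq_sum (v : V) : deg G v = ∑ u, if G.Adj v u then (1:ℝ) else 0 := by
  rw [deg, Finset.card_filter]
  push_cast
  rfl

lemma vol_eq_sum (S : Set V) : vol G S = ∑ v, if v ∈ S then deg G v else 0 := by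
  rw [vol, Finset.sum_filter]

lemma eB_eq_sum (S T : Set V) :
    eB G S T = ∑ v, ∑ u, if v ∈ S ∧ u ∈ T ∧ G.Adj v u then (1:ℝ) else 0 := by
  rw [eB, Finset.card_filter]
  push_cast
  rw [Fintype.sum_prod_type]

lemma eB_eq_sum' (S T : Set V) :
    eB G S T = ∑ v, if v ∈ S then (∑ u, if u ∈ T ∧ G.Adj v u then (1:ℝ) else 0) else 0 := by
  rw [eB_eq_sum]
  refine Finset.sum_congr rfl fun v _ => ?_
  by_cases h : v ∈ S
  · rw [if_pos h]
    refine Finset.sum_congr rfl fun u _ => ?_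
    by_cases h2 : u ∈ T ∧ G.Adj v u
    · rw [if_pos ⟨h, h2.1, h2.2⟩, if_pos h2]
    · rw [if_neg (fun hc => h2 ⟨hc.2.1, hc.2.2⟩), if_neg h2]
  · rw [if_neg h]
    exact Finset.sum_eq_zero fun u _ => if_neg (fun hc => h hc.1)

lemma eB_nonneg (S T : Set V) : 0 ≤ eB G S T := Nat.cast_nonneg _

lemma vol_nonneg (S : Set V) : 0 ≤ vol G S :=
  Finset.sum_nonneg fun v _ => deg_nonneg G v

lemma vol_eq_eB_univ (S : Set V) : vol G S = eB G S Set.univ := by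
  rw [vol_eq_sum, eB_eq_sum']
  refine Finset.sum_congr rfl fun v _ => ?_
  by_cases h : v ∈ S <;> simp [h, deg_eq_sum]

lemma eB_mono {S T S' T' : Set V} (hS : S ⊆ S') (hT : T ⊆ T') :
    eB G S T ≤ eB G S' T' := by
  rw [eB_eq_sum, eB_eq_sum]
  refine Finset.sum_le_sum fun v _ => Finset.sum_le_sum fun u _ => ?_
  by_cases h1 : v ∈ S ∧ u ∈ T ∧ G.Adj v u
  · rw [if_pos h1, if_pos ⟨hS h1.1, hT h1.2.1, h1.2.2⟩]
  · rw [if_neg h1]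
    split_ifs <;> norm_num

lemma eB_empty_left (T : Set V) : eB G ∅ T = 0 := by
  rw [eB_eq_sum']; simp

lemma eB_union_left {S₁ S₂ : Set V} (T : Set V) (h : Disjoint S₁ S₂) :
    eB G (S₁ ∪ S₂) T = eB G S₁ T + eB G S₂ T := by
  rw [eB_eq_sum', eB_eq_sum', eB_eq_sum', ← Finset.sum_add_distrib]
  refine Finset.sum_congr rfl fun v _ => ?_
  by_cases h1 : v ∈ S₁
  · have h2 : v ∉ S₂ := fun hc => (Set.disjoint_left.mp h h1) hc
    simp [h1, h2]
  · by_cases h2 : v ∈ S₂ <;> simp [h1, h2]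

lemma eB_union_right (S : Set V) {T₁ T₂ : Set V} (h : Disjoint T₁ T₂) :
    eB G S (T₁ ∪ T₂) = eB G S T₁ + eB G S T₂ := by
  rw [eB_eq_sum, eB_eq_sum, eB_eq_sum, ← Finset.sum_add_distrib]
  refine Finset.sum_congr rfl fun v _ => ?_
  rw [← Finset.sum_add_distrib]
  refine Finset.sum_congr rfl fun u _ => ?_
  by_cases h1 : u ∈ T₁
  · have h2 : u ∉ T₂ := fun hc => (Set.disjoint_left.mp h h1) hc
    by_cases hp : v ∈ S ∧ G.Adj v u <;> simp [h1, h2] <;> tauto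
  · by_cases h2 : u ∈ T₂ <;> by_cases hp : v ∈ S ∧ G.Adj v u <;>
      simp [h1, h2] <;> tauto

lemma eB_symm (S T : Set V) : eB G S T = eB G T S := by
  rw [eB_eq_sum, eB_eq_sum, Finset.sum_comm]
  refine Finset.sum_congr rfl fun v _ => Finset.sum_congr rfl fun u _ => ?_
  refine if_congr ?_ rfl rfl
  constructor
  · rintro ⟨a, b, c⟩; exact ⟨b, a, c.symm⟩
  · rintro ⟨a, b, c⟩; exact ⟨b, a, c.symm⟩

lemma eB_iUnion_left {r : ℕ} (A : Fin r → Set V)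
    (hd : ∀ i j, i ≠ j → Disjoint (A i) (A j)) (T : Set V) :
    eB G (⋃ i, A i) T = ∑ i, eB G (A i) T := by
  simp only [eB_eq_sum']
  rw [Finset.sum_comm]
  refine Finset.sum_congr rfl fun v _ => ?_
  by_cases h : v ∈ ⋃ i, A i
  · obtain ⟨i₀, hi₀⟩ := Set.mem_iUnion.mp h
    rw [if_pos h, Finset.sum_eq_single i₀]
    · rw [if_pos hi₀]
    · intro j _ hj
      exact if_neg (fun hv => (Set.disjoint_left.mp (hd j i₀ hj) hv) hi₀)
    · intro hmem; exact absurd (Finset.mem_univ i₀) hmem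
  · rw [if_neg h]
    exact (Finset.sum_eq_zero fun j _ =>
      if_neg (fun hv => h (Set.mem_iUnion.mpr ⟨j, hv⟩))).symm

lemma vol_iUnion {r : ℕ} (A : Fin r → Set V)
    (hd : ∀ i j, i ≠ j → Disjoint (A i) (A j)) :
    vol G (⋃ i, A i) = ∑ i, vol G (A i) := by
  simp only [vol_eq_eB_univ]
  exact eB_iUnion_left G A hd _

lemma vol_union {S T : Set V} (h : Disjoint S T) :
    vol G (S ∪ T) = vol G S + vol G T := by
  simp only [vol_eq_eB_univ]
  exact eB_union_left G _ h

lemma sum_subtype_set (A : Set V) (f : V → ℝ) :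
    (∑ v : ↥A, f ↑v) = ∑ v, if v ∈ A then f v else 0 := by
  rw [← Finset.sum_filter]
  exact (Finset.sum_subtype _ (by simp) f).symm


lemma deg_induce (A : Set V) (v : ↥A) :
    deg (SimpleGraph.induce A G) v = ∑ u, if u ∈ A ∧ G.Adj ↑v u then (1:ℝ) else 0 := by
  rw [deg_eq_sum]
  simp only [SimpleGraph.comap_adj, Function.Embedding.coe_subtype]
  rw [sum_subtype_set A (fun u => if G.Adj ↑v u then (1:ℝ) else 0)]
  refine Finset.sum_congr rfl fun u _ => ?_
  by_cases h : u ∈ A <;> by_cases h2 : G.Adj ↑v u <;> simp [h, h2]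

lemma vol_induce (A X : Set V) (hX : X ⊆ A) :
    vol (SimpleGraph.induce A G) (Subtype.val ⁻¹' X) = eB G X A := by
  rw [vol_eq_sum]
  simp only [Set.mem_preimage, deg_induce]
  rw [sum_subtype_set A (fun v => if v ∈ X then
    (∑ u, if u ∈ A ∧ G.Adj v u then (1:ℝ) else 0) else 0)]
  rw [eB_eq_sum']
  refine Finset.sum_congr rfl fun v _ => ?_
  by_cases h : v ∈ X
  · simp only [if_pos (hX h), if_pos h]
  · by_cases h2 : v ∈ A <;> simp [h, h2]

lemma eB_induce (A X Y : Set V) (hX : X ⊆ A) (hY : Y ⊆ A) :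
    eB (SimpleGraph.induce A G) (Subtype.val ⁻¹' X) (Subtype.val ⁻¹' Y) = eB G X Y := by
  rw [eB_eq_sum]
  simp only [Set.mem_preimage, SimpleGraph.comap_adj, Function.Embedding.coe_subtype]
  rw [sum_subtype_set A (fun v => ∑ u : ↥A,
    if v ∈ X ∧ (↑u : V) ∈ Y ∧ G.Adj v ↑u then (1:ℝ) else 0)]
  rw [eB_eq_sum]
  refine Finset.sum_congr rfl fun v _ => ?_
  by_cases h : v ∈ A
  · rw [if_pos h]
    rw [sum_subtype_set A (fun u => if v ∈ X ∧ u ∈ Y ∧ G.Adj v u then (1:ℝ) else 0)]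
    refine Finset.sum_congr rfl fun u _ => ?_
    by_cases h2 : u ∈ A
    · rw [if_pos h2]
    · rw [if_neg h2, if_neg (fun p => h2 (hY p.2.1))]
  · rw [if_neg h]
    exact (Finset.sum_eq_zero fun u _ => if_neg (fun p => h (hX p.1))).symm

lemma vol_pos_of_nonempty {W : Type*} [Fintype W] (H : SimpleGraph W) (X : Set W)
    (hne : X.Nonempty) (hdegX : ∀ v : W, v ∈ X → 1 ≤ deg H v) : 0 < vol H X := by
  obtain ⟨v₀, hv₀⟩ := hne
  have h1 : deg H v₀ ≤ vol H X := by
    refine Finset.single_le_sum (f := fun v => deg H v)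
      (fun i _ => deg_nonneg H i) ?_
    simp [hv₀]
  linarith [hdegX v₀ hv₀]

lemma cond_nonneg {W : Type*} [Fintype W] (H : SimpleGraph W) (X : Set W) :
    0 ≤ cond H X :=
  div_nonneg (eB_nonneg _ _ _) (vol_nonneg _ _)

lemma conductance_le {W : Type*} [Fintype W] (H : SimpleGraph W) (X : Set W)
    (hne : X.Nonempty) (hhalf : vol H X ≤ vol H Set.univ / 2) :
    conductance H ≤ cond H X := by
  refine csInf_le ⟨0, ?_⟩ ⟨X, hne, hhalf, rfl⟩
  rintro x ⟨T, -, -, rfl⟩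
  exact cond_nonneg H T

lemma cond_apply (A X : Set V) (hXA : X ⊆ A) {α : ℝ} (hα : 0 < α)
    (hcond : α ≤ conductance (SimpleGraph.induce A G))
    (hdegA : ∀ v : ↥A, 1 ≤ deg (SimpleGraph.induce A G) v)
    (hhalf : 2 * eB G X A ≤ eB G A A) :
    α * eB G X A ≤ eB G X (A \ X) := by
  rcases X.eq_empty_or_nonempty with rfl | hne
  · rw [eB_empty_left]
    simpa using eB_nonneg G (∅ : Set V) (A \ (∅ : Set V))
  set H := SimpleGraph.induce A G with hH
  set X' : Set ↥A := Subtype.val ⁻¹' X with hX'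
  have hne' : X'.Nonempty := by
    obtain ⟨x, hx⟩ := hne
    exact ⟨⟨x, hXA hx⟩, hx⟩
  have hvolX : vol H X' = eB G X A := vol_induce G A X hXA
  have huniv : (Subtype.val ⁻¹' A : Set ↥A) = Set.univ := by
    ext v; simp [v.2]
  have hvoluniv : vol H (Set.univ : Set ↥A) = eB G A A := by
    rw [← huniv]; exact vol_induce G A A subset_rfl
  have hc : conductance H ≤ cond H X' := by
    refine conductance_le H X' hne' ?_
    rw [hvolX, hvoluniv]; linarith
  have hvolpos : 0 < vol H X' := vol_pos_of_nonempty H X' hne' (fun v _ => hdegA v)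
  have h2 : α ≤ eB H X' X'ᶜ / vol H X' := le_trans hcond hc
  have h3 : α * vol H X' ≤ eB H X' X'ᶜ :=
    (le_div_iff₀ hvolpos).mp h2
  have hcompl : X'ᶜ = (Subtype.val ⁻¹' (A \ X) : Set ↥A) := by
    ext v
    simp [hX', Set.mem_preimage, v.2]
  rw [hcompl] at h3
  rw [eB_induce G A X (A \ X) hXA Set.diff_subset] at h3
  rwa [hvolX] at h3

end Lemmas

set_option maxHeartbeats 1600000

/-- Suppose `G'` is a graph with all degrees in `[1,d]`,
`2 ≤ r ≤ q`, `α > 7ε > 0`, `0 < β ≤ 1/q^10`, `S` has volume `μ_{G'}/q` and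
`e(S, V'∖S) ≤ (ε/2) μ(S)`, and `C_1,…,C_r` is a partition of the vertices such
that each induced subgraph `G'[C_i]` has minimum degree at least `1` and
conductance at least `α`, each `C_i` has outer conductance at most `β` and
volume at least `μ_{G'}/(q+1)`.  Then some `C_i` satisfies
`μ(C_i △ S) ≤ (4ε/α + q²β)·d·μ(S)`. -/
theorem cluster_close_to_small_conductance_set
    {V : Type*} [Fintype V] (G : SimpleGraph V)
    (d : ℕ) (hdeg : ∀ v, 1 ≤ deg G v ∧ deg G v ≤ d)
    (q r : ℕ) (hq : 2 ≤ q) (hr2 : 2 ≤ r) (hrq : r ≤ q)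
    (ε α β : ℝ) (hε : 0 < ε) (hα : 0 < α) (hβ : 0 < β)
    (hαε : 7 * ε < α) (hβq : β ≤ 1 / (q : ℝ) ^ 10)
    (S : Set V) (hSvol : vol G S = vol G Set.univ / q)
    (hScut : eB G S Sᶜ ≤ (ε / 2) * vol G S)
    (C : Fin r → Set V)
    (hdisj : ∀ i j, i ≠ j → Disjoint (C i) (C j))
    (hcover : (⋃ i, C i) = Set.univ)
    (hindeg : ∀ i, ∀ v : (C i), 1 ≤ deg (SimpleGraph.induce (C i) G) v)
    (hin : ∀ i, α ≤ conductance (SimpleGraph.induce (C i) G))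
    (hout : ∀ i, cond G (C i) ≤ β)
    (hvol : ∀ i, vol G Set.univ / (q + 1) ≤ vol G (C i)) :
    ∃ i, vol G (symmDiff (C i) S) ≤ (4 * ε / α + (q : ℝ) ^ 2 * β) * d * vol G S := by
  have hr0 : 0 < r := by omega
  rcases isEmpty_or_nonempty V with hV | hV
  · refine ⟨⟨0, hr0⟩, ?_⟩
    have h0 : ∀ X : Set V, vol G X = 0 := fun X => by
      rw [vol, Finset.univ_eq_empty, Finset.filter_empty, Finset.sum_empty]
    rw [h0, h0, mul_zero]
  obtain ⟨v₀⟩ := hV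
  have hq2 : (2:ℝ) ≤ (q:ℝ) := by exact_mod_cast hq
  have hq0 : (0:ℝ) < (q:ℝ) := by linarith
  have hd1 : (1:ℝ) ≤ (d:ℝ) := le_trans (hdeg v₀).1 (hdeg v₀).2
  have hμpos : 0 < vol G Set.univ := by
    have h1 : deg G v₀ ≤ vol G Set.univ := by
      refine Finset.single_le_sum (f := fun v => deg G v) (fun i _ => deg_nonneg G i) ?_
      simp
    linarith [(hdeg v₀).1]
  set μ := vol G Set.univ with hμdef
  set μS := vol G S with hμSdef
  have hμS : 0 < μS := by
    rw [hSvol]; positivity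
  have hμ_eq : μ = q * μS := by
    rw [hSvol]; field_simp
  -- key small quantities
  have hqpow : (512:ℝ) ≤ (q:ℝ)^9 := by
    calc (512:ℝ) = 2^9 := by norm_num
    _ ≤ (q:ℝ)^9 := by gcongr <;> norm_num
  have hqβ : (q:ℝ) * β ≤ 1/512 := by
    have h1 : (q:ℝ) * β ≤ (q:ℝ) * (1 / (q:ℝ)^10) := by
      exact mul_le_mul_of_nonneg_left hβq (by positivity)
    have h2 : (q:ℝ) * (1 / (q:ℝ)^10) = 1 / (q:ℝ)^9 := by
      field_simp
    rw [h2] at h1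
    refine h1.trans ?_
    rw [div_le_div_iff₀ (by positivity) (by norm_num)]
    linarith
  have hε14 : ε / 2 ≤ α / 14 := by linarith
  -- per-index definitions
  set Si : Fin r → Set V := fun i => S ∩ C i with hSidef
  set Ti : Fin r → Set V := fun i => C i \ S with hTidef
  set c : Fin r → ℝ := fun i => eB G (Si i) (Ti i) with hcdef
  set b : Fin r → ℝ := fun i => eB G (C i) (C i)ᶜ with hbdef
  have hb_nonneg : ∀ i, 0 ≤ b i := fun i => eB_nonneg G _ _
  have hc_nonneg : ∀ i, 0 ≤ c i := fun i => eB_nonneg G _ _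
  have hSid : ∀ i j, i ≠ j → Disjoint (Si i) (Si j) := fun i j h =>
    Set.disjoint_left.mpr fun v hv1 hv2 =>
      (Set.disjoint_left.mp (hdisj i j h) hv1.2) hv2.2
  have hSunion : (⋃ i, Si i) = S := by
    simp only [hSidef, ← Set.inter_iUnion, hcover, Set.inter_univ]
  have hsum_c : ∑ i, c i ≤ (ε/2) * μS := by
    have h1 : ∀ i ∈ Finset.univ, c i ≤ eB G (Si i) Sᶜ := fun i _ =>
      eB_mono G subset_rfl (fun v hv => hv.2)
    calc ∑ i, c i ≤ ∑ i, eB G (Si i) Sᶜ := Finset.sum_le_sum h1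
    _ = eB G (⋃ i, Si i) Sᶜ := (eB_iUnion_left G Si hSid Sᶜ).symm
    _ = eB G S Sᶜ := by rw [hSunion]
    _ ≤ (ε/2) * μS := hScut
  have hvolC_pos : ∀ i, 0 < vol G (C i) := fun i =>
    lt_of_lt_of_le (by positivity) (hvol i)
  have hb_le : ∀ i, b i ≤ β * vol G (C i) := fun i => by
    have h1 := hout i
    rw [cond, div_le_iff₀ (hvolC_pos i)] at h1
    exact h1
  have hsum_vol : ∑ i, vol G (C i) = μ := by
    rw [← vol_iUnion G C hdisj, hcover]
  have hsum_b : ∑ i, b i ≤ β * μ := by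
    calc ∑ i, b i ≤ ∑ i, β * vol G (C i) := Finset.sum_le_sum fun i _ => hb_le i
    _ = β * μ := by rw [← Finset.mul_sum, hsum_vol]
  have hsum_b' : ∑ i, b i ≤ (q:ℝ) * β * μS := by
    rw [hμ_eq] at hsum_b; linarith
  -- decomposition of volumes
  have hdecomp : ∀ (i : Fin r) (X : Set V), vol G X = eB G X (C i) + eB G X (C i)ᶜ :=
    fun i X => by
      rw [vol_eq_eB_univ, ← Set.union_compl_self (C i),
        eB_union_right G X disjoint_compl_right]
  have hX_le : ∀ (i : Fin r) (X : Set V), X ⊆ C i →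
      vol G X ≤ eB G X (C i) + b i := fun i X hX => by
    rw [hdecomp i X]
    exact add_le_add le_rfl (eB_mono G hX subset_rfl)
  have hge : ∀ (i : Fin r) (X : Set V), eB G X (C i) ≤ vol G X := fun i X => by
    rw [hdecomp i X]
    linarith [eB_nonneg G X (C i)ᶜ]
  have hsplit : ∀ i, eB G (Si i) (C i) + eB G (Ti i) (C i) = eB G (C i) (C i) :=
    fun i => by
      rw [← eB_union_left G (C i) (Set.disjoint_left.mpr fun v hv1 hv2 => hv2.2 hv1.1)]
      congr 1
      rw [hSidef, hTidef]
      simp only [Set.inter_comm S (C i)]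
      exact Set.inter_union_diff (C i) S
  have heCC : ∀ i, eB G (C i) (C i) = vol G (C i) - b i := fun i => by
    rw [hdecomp i (C i)]; ring
  -- conductance bounds
  have hheavy_bound : ∀ i, eB G (Ti i) (C i) ≤ eB G (Si i) (C i) →
      α * eB G (Ti i) (C i) ≤ c i := by
    intro i hi
    have h2 : 2 * eB G (Ti i) (C i) ≤ eB G (C i) (C i) := by
      have := hsplit i; linarith
    have h3 := cond_apply G (C i) (Ti i) Set.diff_subset hα (hin i) (hindeg i) h2
    have h4 : C i \ Ti i = Si i := by
      rw [hTidef, hSidef, Set.diff_diff_right_self, Set.inter_comm]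
    rw [h4, eB_symm G (Ti i) (Si i)] at h3
    exact h3
  have hlight_bound : ∀ i, eB G (Si i) (C i) < eB G (Ti i) (C i) →
      α * eB G (Si i) (C i) ≤ c i := by
    intro i hi
    have h2 : 2 * eB G (Si i) (C i) ≤ eB G (C i) (C i) := by
      have := hsplit i; linarith
    have h3 := cond_apply G (C i) (Si i) Set.inter_subset_right hα (hin i) (hindeg i) h2
    have h4 : C i \ Si i = Ti i := by
      rw [hTidef, hSidef, Set.diff_inter_self_eq_diff]
    rw [h4] at h3
    exact h3
  have hlight_vol : ∀ i, eB G (Si i) (C i) < eB G (Ti i) (C i) →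
      α * vol G (Si i) ≤ c i + α * b i := by
    intro i hi
    have h1 := hlight_bound i hi
    have h2 := hX_le i (Si i) Set.inter_subset_right
    have h3 := mul_le_mul_of_nonneg_left h2 hα.le
    linarith
  have hμS_split : ∑ i, vol G (Si i) = μS := by
    rw [← vol_iUnion G Si hSid, hSunion]
  -- existence of a heavy index
  have hex : ∃ i, eB G (Ti i) (C i) ≤ eB G (Si i) (C i) := by
    by_contra hno
    push_neg at hno
    have key : ∀ i ∈ Finset.univ, α * vol G (Si i) ≤ c i + α * b i :=
      fun i _ => hlight_vol i (hno i)
    have h1 : α * μS ≤ ∑ i, c i + α * ∑ i, b i := by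
      calc α * μS = ∑ i, α * vol G (Si i) := by
            rw [← Finset.mul_sum, hμS_split]
      _ ≤ ∑ i, (c i + α * b i) := Finset.sum_le_sum key
      _ = ∑ i, c i + α * ∑ i, b i := by
            rw [Finset.sum_add_distrib, Finset.mul_sum]
    have h2 : ∑ i, c i ≤ (α/14) * μS := by
      refine hsum_c.trans ?_
      exact mul_le_mul_of_nonneg_right hε14 hμS.le
    have h3 : α * ∑ i, b i ≤ α * ((1/512) * μS) := by
      refine mul_le_mul_of_nonneg_left ?_ hα.le
      refine hsum_b'.trans ?_
      exact mul_le_mul_of_nonneg_right hqβ hμS.le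
    have hpos : 0 < α * μS := mul_pos hα hμS
    nlinarith [hpos, h1, h2, h3]
  obtain ⟨i, hi⟩ := hex
  -- every other index is light
  have pair_le : ∀ (f : Fin r → ℝ), (∀ k, 0 ≤ f k) → ∀ j, j ≠ i →
      f i + f j ≤ ∑ k, f k := by
    intro f hf j hj
    rw [← Finset.sum_pair (Ne.symm hj)]
    exact Finset.sum_le_sum_of_subset_of_nonneg (Finset.subset_univ _)
      (fun k _ _ => hf k)
  have hCk : ∀ k : Fin r, (2/3) * μS ≤ vol G (C k) := by
    intro k
    have h1 := hvol k
    rw [hμ_eq] at h1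
    have hfrac : (2:ℝ)/3 ≤ (q:ℝ)/((q:ℝ)+1) := by
      rw [div_le_div_iff₀ (by norm_num) (by positivity)]
      linarith
    calc (2/3) * μS ≤ ((q:ℝ)/((q:ℝ)+1)) * μS :=
          mul_le_mul_of_nonneg_right hfrac hμS.le
    _ = (q:ℝ) * μS / ((q:ℝ)+1) := by ring
    _ ≤ vol G (C k) := h1
  have hheavy_volS : ∀ k, eB G (Ti k) (C k) ≤ eB G (Si k) (C k) →
      α * vol G (C k) - α * b k - c k ≤ α * vol G (Si k) := by
    intro k hk
    have h1 := hheavy_bound k hk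
    have h2 := mul_le_mul_of_nonneg_left (hge k (Si k)) hα.le
    have h3 := hsplit k
    have h4 := heCC k
    nlinarith [h1, h2, h3, h4]
  have hlightj : ∀ j, j ≠ i → eB G (Si j) (C j) < eB G (Ti j) (C j) := by
    intro j hj
    by_contra hcon
    push_neg at hcon
    have hI := hheavy_volS i hi
    have hJ := hheavy_volS j hcon
    have hsum2 : vol G (Si i) + vol G (Si j) ≤ μS := by
      rw [← hμS_split]
      exact pair_le _ (fun k => vol_nonneg G _) j hj
    have hbij : b i + b j ≤ (q:ℝ) * β * μS :=
      (pair_le b hb_nonneg j hj).trans hsum_b'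
    have hcij : c i + c j ≤ (ε/2) * μS :=
      (pair_le c hc_nonneg j hj).trans hsum_c
    have hCi := hCk i
    have hCj := hCk j
    have e1 : α * ((2/3) * μS) ≤ α * vol G (C i) :=
      mul_le_mul_of_nonneg_left hCi hα.le
    have e2 : α * ((2/3) * μS) ≤ α * vol G (C j) :=
      mul_le_mul_of_nonneg_left hCj hα.le
    have e3 : α * (b i + b j) ≤ α * ((1/512) * μS) := by
      refine mul_le_mul_of_nonneg_left (hbij.trans ?_) hα.le
      exact mul_le_mul_of_nonneg_right hqβ hμS.le
    have e4 : c i + c j ≤ (α/14) * μS :=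
      hcij.trans (mul_le_mul_of_nonneg_right hε14 hμS.le)
    have e5 : α * (vol G (Si i) + vol G (Si j)) ≤ α * μS :=
      mul_le_mul_of_nonneg_left hsum2 hα.le
    have hpos : 0 < α * μS := mul_pos hα hμS
    linarith
  -- final bound for index i
  refine ⟨i, ?_⟩
  have hsymm : symmDiff (C i) S = Ti i ∪ (S \ C i) := by
    rw [Set.symmDiff_def, hTidef]
  have hvol_symm : vol G (symmDiff (C i) S) = vol G (Ti i) + vol G (S \ C i) := by
    rw [hsymm, vol_union G (Set.disjoint_left.mpr fun v hv1 hv2 => hv2.2 hv1.1)]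
  -- bound on Ti i
  have hA : α * vol G (Ti i) ≤ c i + α * b i := by
    have h1 := hheavy_bound i hi
    have h2 := mul_le_mul_of_nonneg_left (hX_le i (Ti i) Set.diff_subset) hα.le
    linarith
  -- bound on S \ C i
  have hSdiff : vol G (S \ C i) = ∑ j ∈ Finset.univ.erase i, vol G (Si j) := by
    have h1 : vol G S = vol G (Si i) + vol G (S \ C i) := by
      rw [← vol_union G (Set.disjoint_left.mpr fun v hv1 hv2 => hv2.2 hv1.2)]
      congr 1
      rw [hSidef]
      exact (Set.inter_union_diff S (C i)).symm
    have h2 := Finset.add_sum_erase Finset.univ (fun j => vol G (Si j))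
      (Finset.mem_univ i)
    rw [hμS_split] at h2
    have : μS = vol G (Si i) + vol G (S \ C i) := h1
    linarith
  have hB : α * vol G (S \ C i) ≤ ∑ j, c j + α * ∑ j, b j := by
    have key : ∀ j ∈ Finset.univ.erase i, α * vol G (Si j) ≤ c j + α * b j := by
      intro j hjmem
      exact hlight_vol j (hlightj j (Finset.ne_of_mem_erase hjmem))
    calc α * vol G (S \ C i) = ∑ j ∈ Finset.univ.erase i, α * vol G (Si j) := by
          rw [hSdiff, Finset.mul_sum]
    _ ≤ ∑ j ∈ Finset.univ.erase i, (c j + α * b j) := Finset.sum_le_sum key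
    _ ≤ ∑ j, (c j + α * b j) := by
          refine Finset.sum_le_sum_of_subset_of_nonneg (Finset.erase_subset _ _) ?_
          intro k _ _
          have := hc_nonneg k
          have := hb_nonneg k
          positivity
    _ = ∑ j, c j + α * ∑ j, b j := by rw [Finset.sum_add_distrib, Finset.mul_sum]
  -- assemble
  have hci : c i ≤ ∑ j, c j :=
    Finset.single_le_sum (fun k _ => hc_nonneg k) (Finset.mem_univ i)
  have hbi : b i ≤ ∑ j, b j :=
    Finset.single_le_sum (fun k _ => hb_nonneg k) (Finset.mem_univ i)
  have htot : α * vol G (symmDiff (C i) S) ≤ 2 * ∑ j, c j + 2 * (α * ∑ j, b j) := by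
    rw [hvol_symm]
    have hbα : α * b i ≤ α * ∑ j, b j := mul_le_mul_of_nonneg_left hbi hα.le
    linarith
  have hrhs : α * ((4 * ε / α + (q:ℝ)^2 * β) * d * μS)
      = (4 * ε + α * ((q:ℝ)^2 * β)) * d * μS := by
    have h0 : 4 * ε / α * α = 4 * ε := div_mul_cancel₀ _ hα.ne'
    calc α * ((4 * ε / α + (q:ℝ)^2 * β) * d * μS)
        = (4 * ε / α * α + α * ((q:ℝ)^2 * β)) * d * μS := by ring
    _ = (4 * ε + α * ((q:ℝ)^2 * β)) * d * μS := by rw [h0]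
  have h2c : 2 * ∑ j, c j ≤ ε * μS := by linarith
  have h2b : 2 * (α * ∑ j, b j) ≤ 2 * (α * ((q:ℝ) * β * μS)) := by
    have := mul_le_mul_of_nonneg_left hsum_b' hα.le
    linarith
  have hfin : α * vol G (symmDiff (C i) S) ≤ α * ((4 * ε / α + (q:ℝ)^2 * β) * d * μS) := by
    rw [hrhs]
    have hq2d : 2 * (q:ℝ) ≤ (q:ℝ)^2 * d := by nlinarith [hq2, hd1]
    have h6 : 2 * (α * ((q:ℝ) * β * μS)) ≤ α * ((q:ℝ)^2 * β) * d * μS := by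
      have h7 : (2 * (q:ℝ)) * (α * β * μS) ≤ ((q:ℝ)^2 * (d:ℝ)) * (α * β * μS) :=
        mul_le_mul_of_nonneg_right hq2d (by positivity)
      linarith [h7]
    have h8 : ε * μS ≤ 4 * ε * (d:ℝ) * μS := by
      nlinarith [mul_pos hε hμS]
    have hexp : (4 * ε + α * ((q:ℝ)^2 * β)) * d * μS
        = 4 * ε * (d:ℝ) * μS + α * ((q:ℝ)^2 * β) * d * μS := by ring
    rw [hexp]
    linarith
  exact le_of_mul_le_mul_left hfin hα


end Sublinear
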